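/- Assume the MAR condition and the ε-positivity condition, and let π̂ : 𝒳 → ℝ and μ̂ : 𝒳 → ℝ be measurable nuisance estimates with 1 − π̂(X) ≥ ε′ almost surely for some ε′ > 0, such that π̂(X) − π(X) and μ0(X) − μ̂(X) are in L²(P) and all quantities below are integrable. Then the bias of the doubly robust functional obeys the doubly robust bound: | E[ ((1−R)/(1−π̂(X)))·(S − μ̂(X)) + μ̂(X) ] − ψ | ≤ (1/ε′) · ‖π̂(X) − π(X)‖_{L²(P)} · ‖μ̂(X) − μ0(X)‖_{L²(P)}. -/

import Mathlib

open MeasureTheory ProbabilityTheory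
open scoped ENNReal

lemma cs_helper {α : Type*} {mα : MeasurableSpace α} {μ : Measure α} {f g : α → ℝ}
    (hf : MemLp f 2 μ) (hg : MemLp g 2 μ) :
    ∫ x, |f x| * |g x| ∂μ ≤ (eLpNorm f 2 μ).toReal * (eLpNorm g 2 μ).toReal := by
  have hpq : Real.HolderConjugate 2 2 := Real.HolderConjugate.two_two
  have h2 : (2 : ℝ≥0∞) = ENNReal.ofReal (2:ℝ) := by norm_num
  have H := MeasureTheory.integral_mul_norm_le_Lp_mul_Lq hpq (h2 ▸ hf) (h2 ▸ hg)
  rw [hf.eLpNorm_eq_integral_rpow_norm two_ne_zero ENNReal.ofNat_ne_top,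
      hg.eLpNorm_eq_integral_rpow_norm two_ne_zero ENNReal.ofNat_ne_top,
      ENNReal.toReal_ofReal (Real.rpow_nonneg (integral_nonneg fun a => by positivity) _),
      ENNReal.toReal_ofReal (Real.rpow_nonneg (integral_nonneg fun a => by positivity) _)]
  simpa [Real.norm_eq_abs, one_div] using H

lemma mul_L2_int {α : Type*} {mα : MeasurableSpace α} {μ : Measure α} {f g : α → ℝ}
    (hf : MemLp f 2 μ) (hg : MemLp g 2 μ) :
    Integrable (fun x => |f x| * |g x|) μ := by
  have h : MemLp ((fun x => |f x|) • (fun x => |g x|)) 1 μ := by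
    refine MemLp.smul (p := 2) (q := 2) (r := 1) ?_ ?_ (hpqr := ?_)
    · simpa [Real.norm_eq_abs] using hg.norm
    · simpa [Real.norm_eq_abs] using hf.norm
    · exact ⟨by simp [ENNReal.inv_two_add_inv_two]⟩
  exact memLp_one_iff_integrable.mp h

theorem dr_bias_bound
    {Ω 𝒳 : Type*} [MeasurableSpace Ω] [MeasurableSpace 𝒳]
    (P : Measure Ω) [IsProbabilityMeasure P]
    (X : Ω → 𝒳) (hX : Measurable X)
    (R : Ω → ℝ) (hR : Measurable R) (hR01 : ∀ ω, R ω = 0 ∨ R ω = 1)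
    (S : Ω → ℝ) (hSmeas : Measurable S) (hSint : Integrable S P)
    -- the σ-algebra generated by X
    (mX : MeasurableSpace Ω) (hmX : mX = MeasurableSpace.comap X inferInstance)
    -- MAR condition: E[(1−R)·S | mX] = E[1−R | mX] · E[S | mX] a.s.
    (hMAR : P[fun ω => (1 - R ω) * S ω|mX]
      =ᵐ[P] fun ω => (P[fun ω' => 1 - R ω'|mX]) ω * (P[S|mX]) ω)
    -- ε-positivity condition: π(X) = E[R | mX] ≤ 1 − ε a.s.
    (ε : ℝ) (hε : 0 < ε)
    (hpos : ∀ᵐ ω ∂P, (P[R|mX]) ω ≤ 1 - ε)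
    -- abbreviations: π(X), μ0(X) and ψ
    (πX μ0X : Ω → ℝ) (ψ : ℝ)
    (hπX : πX = P[R|mX])
    (hμ0X : μ0X = fun ω => (P[fun ω' => (1 - R ω') * S ω'|mX]) ω / (1 - πX ω))
    (hψ : ψ = ∫ ω, S ω ∂P)
    -- nuisance estimates
    (πhat μhat : 𝒳 → ℝ) (hπhat : Measurable πhat) (hμhat : Measurable μhat)
    (ε' : ℝ) (hε' : 0 < ε')
    (hpos' : ∀ᵐ ω ∂P, ε' ≤ 1 - πhat (X ω))
    -- L² assumptions and integrability of all quantities involved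
    (hL2π : MemLp (fun ω => πhat (X ω) - πX ω) 2 P)
    (hL2μ : MemLp (fun ω => μ0X ω - μhat (X ω)) 2 P)
    (hint1 : Integrable
      (fun ω => (1 - R ω) / (1 - πhat (X ω)) * (S ω - μhat (X ω)) + μhat (X ω)) P) :
    |(∫ ω, ((1 - R ω) / (1 - πhat (X ω)) * (S ω - μhat (X ω)) + μhat (X ω)) ∂P) - ψ|
      ≤ (1 / ε') * (eLpNorm (fun ω => πhat (X ω) - πX ω) 2 P).toReal
          * (eLpNorm (fun ω => μhat (X ω) - μ0X ω) 2 P).toReal := by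
  have hm : mX ≤ _ := hmX.trans_le hX.comap_le
  haveI : SigmaFinite (P.trim hm) := by infer_instance
  -- measurability on mX
  have hXmX : Measurable[mX] X := by rw [hmX]; exact Measurable.of_comap_le le_rfl
  have hπhatX : StronglyMeasurable[mX] (fun ω => πhat (X ω)) :=
    (hπhat.comp hXmX).stronglyMeasurable
  have hμhatXSM : StronglyMeasurable[mX] (fun ω => μhat (X ω)) :=
    (hμhat.comp hXmX).stronglyMeasurable
  have hwSM : StronglyMeasurable[mX] (fun ω => (1 - πhat (X ω))⁻¹) :=
    ((measurable_const.sub (hπhat.comp hXmX)).inv).stronglyMeasurable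
  -- basic integrability
  have hRint : Integrable R P := by
    refine (integrable_const (1:ℝ)).mono' hR.aestronglyMeasurable (ae_of_all _ fun ω => ?_)
    rcases hR01 ω with h | h <;> simp [h]
  have h1mR_int : Integrable (fun ω => 1 - R ω) P := (integrable_const (1:ℝ)).sub hRint
  have habsR : ∀ ω, |1 - R ω| ≤ 1 := fun ω => by rcases hR01 ω with h | h <;> simp [h]
  have int_1mRS : Integrable (fun ω => (1 - R ω) * S ω) P := by
    refine hSint.abs.mono' ((measurable_const.sub hR).mul hSmeas).aestronglyMeasurable
      (ae_of_all _ fun ω => ?_)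
    rw [Real.norm_eq_abs, abs_mul]
    calc |1 - R ω| * |S ω| ≤ 1 * |S ω| :=
          mul_le_mul_of_nonneg_right (habsR ω) (abs_nonneg _)
      _ = |S ω| := one_mul _
  -- π and μ0 facts
  have hπ_eps : ∀ᵐ ω ∂P, πX ω ≤ 1 - ε := hπX ▸ hpos
  have h1mπ : P[fun ω' => (1:ℝ) - R ω'|mX] =ᵐ[P] fun ω => 1 - πX ω := by
    have h := condExp_sub (μ := P) (m := mX) (integrable_const (1:ℝ)) hRint
    have h0 : P[fun _ : Ω => (1:ℝ)|mX] = fun _ => (1:ℝ) := condExp_const (μ := P) hm (1:ℝ)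
    refine h.trans ?_
    rw [h0, hπX]
    rfl
  have hMAR' : P[fun ω => (1 - R ω) * S ω|mX]
      =ᵐ[P] fun ω => (1 - πX ω) * (P[S|mX]) ω := by
    refine hMAR.trans ?_
    filter_upwards [h1mπ] with ω h
    rw [h]
  have hμ0 : μ0X =ᵐ[P] P[S|mX] := by
    filter_upwards [hMAR', hπ_eps] with ω h1 h2
    have hne : (1:ℝ) - πX ω ≠ 0 := by linarith
    rw [hμ0X]
    simp only
    rw [h1]
    field_simp
  have int_μ0 : Integrable μ0X P := integrable_condExp.congr hμ0.symm
  have int_diffμ : Integrable (fun ω => μ0X ω - μhat (X ω)) P := hL2μ.integrable one_le_two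
  have int_μhX : Integrable (fun ω => μhat (X ω)) P := by
    have h := int_μ0.sub int_diffμ
    refine h.congr (ae_of_all _ fun ω => ?_)
    simp
  have int_1mRμ : Integrable (fun ω => (1 - R ω) * μhat (X ω)) P := by
    refine int_μhX.abs.mono' ((measurable_const.sub hR).mul (hμhat.comp hX)).aestronglyMeasurable
      (ae_of_all _ fun ω => ?_)
    rw [Real.norm_eq_abs, abs_mul]
    calc |1 - R ω| * |μhat (X ω)| ≤ 1 * |μhat (X ω)| :=
          mul_le_mul_of_nonneg_right (habsR ω) (abs_nonneg _)
      _ = |μhat (X ω)| := one_mul _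
  have int_Z : Integrable (fun ω => (1 - R ω) * (S ω - μhat (X ω))) P :=
    (int_1mRS.sub int_1mRμ).congr (ae_of_all _ fun ω => by simp only [Pi.sub_apply]; ring)
  have int_wZ : Integrable
      (fun ω => (1 - πhat (X ω))⁻¹ * ((1 - R ω) * (S ω - μhat (X ω)))) P := by
    refine (hint1.sub int_μhX).congr (ae_of_all _ fun ω => ?_)
    simp only [Pi.sub_apply]
    rw [div_eq_mul_inv]
    ring
  have int_wZ' : Integrable ((fun ω => (1 - πhat (X ω))⁻¹)
      * (fun ω => (1 - R ω) * (S ω - μhat (X ω)))) P := int_wZ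
  -- pull-out properties
  have hA : P[(fun ω => (1 - πhat (X ω))⁻¹) * (fun ω => (1 - R ω) * (S ω - μhat (X ω)))|mX]
      =ᵐ[P] (fun ω => (1 - πhat (X ω))⁻¹) * P[fun ω => (1 - R ω) * (S ω - μhat (X ω))|mX] :=
    condExp_mul_of_stronglyMeasurable_left hwSM int_wZ' int_Z
  have int_C : Integrable ((fun ω => μhat (X ω)) * (fun ω => 1 - R ω)) P :=
    int_1mRμ.congr (ae_of_all _ fun ω => (mul_comm _ _))
  have hC0 : P[(fun ω => μhat (X ω)) * (fun ω => 1 - R ω)|mX]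
      =ᵐ[P] (fun ω => μhat (X ω)) * P[fun ω => 1 - R ω|mX] :=
    condExp_mul_of_stronglyMeasurable_left hμhatXSM int_C h1mR_int
  have heqC : (fun ω => μhat (X ω)) * (fun ω => (1:ℝ) - R ω)
      = fun ω => (1 - R ω) * μhat (X ω) := funext fun ω => mul_comm _ _
  have hC : P[fun ω => (1 - R ω) * μhat (X ω)|mX]
      =ᵐ[P] (fun ω => μhat (X ω)) * P[fun ω => 1 - R ω|mX] := by
    rw [← heqC]; exact hC0
  -- conditional expectation of Z
  have hZsplit : (fun ω => (1 - R ω) * (S ω - μhat (X ω)))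
      = (fun ω => (1 - R ω) * S ω) - fun ω => (1 - R ω) * μhat (X ω) :=
    funext fun ω => by simp [Pi.sub_apply, mul_sub]
  have hBsub : P[fun ω => (1 - R ω) * (S ω - μhat (X ω))|mX]
      =ᵐ[P] P[fun ω => (1 - R ω) * S ω|mX] - P[fun ω => (1 - R ω) * μhat (X ω)|mX] := by
    rw [hZsplit]; exact condExp_sub int_1mRS int_1mRμ mX
  have hB : P[fun ω => (1 - R ω) * (S ω - μhat (X ω))|mX]
      =ᵐ[P] fun ω => (1 - πX ω) * (μ0X ω - μhat (X ω)) := by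
    filter_upwards [hBsub, hMAR', hC, h1mπ, hμ0] with ω h1 h2 h3 h4 h5
    simp only [Pi.sub_apply, Pi.mul_apply] at h1 h3
    rw [h1, h2, h3, h4, ← h5]
    ring
  -- conditional expectation of the bias integrand
  have hfsplit : (fun ω => (1 - R ω) / (1 - πhat (X ω)) * (S ω - μhat (X ω)) + μhat (X ω) - S ω)
      = (fun ω => (1 - πhat (X ω))⁻¹ * ((1 - R ω) * (S ω - μhat (X ω))))
        + ((fun ω => μhat (X ω)) - S) := by
    funext ω
    simp only [Pi.add_apply, Pi.sub_apply]
    rw [div_eq_mul_inv]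
    ring
  have hfsplit' : (fun ω => (1 - R ω) / (1 - πhat (X ω)) * (S ω - μhat (X ω)) + μhat (X ω) - S ω)
      = ((fun ω => (1 - πhat (X ω))⁻¹) * (fun ω => (1 - R ω) * (S ω - μhat (X ω))))
        + ((fun ω => μhat (X ω)) - S) := hfsplit
  have int_f : Integrable
      (fun ω => (1 - R ω) / (1 - πhat (X ω)) * (S ω - μhat (X ω)) + μhat (X ω) - S ω) P :=
    hint1.sub hSint
  have e1 : P[fun ω => (1 - R ω) / (1 - πhat (X ω)) * (S ω - μhat (X ω)) + μhat (X ω) - S ω|mX]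
      =ᵐ[P] P[(fun ω => (1 - πhat (X ω))⁻¹) * (fun ω => (1 - R ω) * (S ω - μhat (X ω)))|mX]
        + P[(fun ω => μhat (X ω)) - S|mX] := by
    rw [hfsplit']
    exact condExp_add int_wZ' (int_μhX.sub hSint) mX
  have e2 : P[(fun ω => μhat (X ω)) - S|mX]
      =ᵐ[P] (fun ω => μhat (X ω)) - P[S|mX] := by
    have h := condExp_sub (μ := P) (m := mX) int_μhX hSint
    rwa [condExp_of_stronglyMeasurable hm hμhatXSM int_μhX] at h
  have hE : P[fun ω => (1 - R ω) / (1 - πhat (X ω)) * (S ω - μhat (X ω)) + μhat (X ω) - S ω|mX]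
      =ᵐ[P] fun ω => (πhat (X ω) - πX ω) * (μ0X ω - μhat (X ω)) * (1 - πhat (X ω))⁻¹ := by
    filter_upwards [e1, hA, hB, e2, hμ0, hpos'] with ω h1 h2 h3 h4 h5 h6
    simp only [Pi.add_apply, Pi.sub_apply, Pi.mul_apply] at h1 h2 h4
    have hne : (1:ℝ) - πhat (X ω) ≠ 0 := by linarith
    rw [h1, h2, h3, h4, ← h5]
    field_simp
    ring
  -- integrability of the bounding function
  have int_prod : Integrable
      (fun ω => |πhat (X ω) - πX ω| * |μ0X ω - μhat (X ω)|) P := mul_L2_int hL2π hL2μ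
  have int_bound : Integrable
      (fun ω => (1 / ε') * (|πhat (X ω) - πX ω| * |μ0X ω - μhat (X ω)|)) P :=
    int_prod.const_mul _
  -- the swap of eLpNorm arguments
  have hBB : eLpNorm (fun ω => μhat (X ω) - μ0X ω) 2 P
      = eLpNorm (fun ω => μ0X ω - μhat (X ω)) 2 P := by
    rw [← eLpNorm_neg (f := fun ω => μ0X ω - μhat (X ω))]
    congr 1
    funext ω
    simp [neg_sub]
  calc |(∫ ω, ((1 - R ω) / (1 - πhat (X ω)) * (S ω - μhat (X ω)) + μhat (X ω)) ∂P) - ψ|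
      = |∫ ω, (P[fun ω' => (1 - R ω') / (1 - πhat (X ω')) * (S ω' - μhat (X ω'))
          + μhat (X ω') - S ω'|mX]) ω ∂P| := by
        rw [hψ, ← integral_sub hint1 hSint, integral_condExp hm]
    _ ≤ ∫ ω, |(P[fun ω' => (1 - R ω') / (1 - πhat (X ω')) * (S ω' - μhat (X ω'))
          + μhat (X ω') - S ω'|mX]) ω| ∂P := by
        simpa [Real.norm_eq_abs] using norm_integral_le_integral_norm
          (μ := P) (f := P[fun ω' => (1 - R ω') / (1 - πhat (X ω')) * (S ω' - μhat (X ω'))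
            + μhat (X ω') - S ω'|mX])
    _ ≤ ∫ ω, (1 / ε') * (|πhat (X ω) - πX ω| * |μ0X ω - μhat (X ω)|) ∂P := by
        refine integral_mono_ae integrable_condExp.abs int_bound ?_
        filter_upwards [hE, hpos'] with ω h1 h2
        have hw_nonneg : (0:ℝ) ≤ (1 - πhat (X ω))⁻¹ := inv_nonneg.2 (by linarith)
        have hw_le : (1 - πhat (X ω))⁻¹ ≤ 1 / ε' := by
          rw [one_div]
          exact inv_anti₀ hε' h2
        rw [h1, abs_mul, abs_mul, abs_of_nonneg hw_nonneg]
        calc |πhat (X ω) - πX ω| * |μ0X ω - μhat (X ω)| * (1 - πhat (X ω))⁻¹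
            ≤ |πhat (X ω) - πX ω| * |μ0X ω - μhat (X ω)| * (1 / ε') :=
              mul_le_mul_of_nonneg_left hw_le (by positivity)
          _ = 1 / ε' * (|πhat (X ω) - πX ω| * |μ0X ω - μhat (X ω)|) := by ring
    _ = (1 / ε') * ∫ ω, |πhat (X ω) - πX ω| * |μ0X ω - μhat (X ω)| ∂P := by
        rw [integral_const_mul]
    _ ≤ (1 / ε') * ((eLpNorm (fun ω => πhat (X ω) - πX ω) 2 P).toReal
          * (eLpNorm (fun ω => μ0X ω - μhat (X ω)) 2 P).toReal) := by
        refine mul_le_mul_of_nonneg_left (cs_helper hL2π hL2μ) (by positivity)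
    _ = (1 / ε') * (eLpNorm (fun ω => πhat (X ω) - πX ω) 2 P).toReal
          * (eLpNorm (fun ω => μhat (X ω) - μ0X ω) 2 P).toReal := by
        rw [hBB]; ring
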